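/- Let f : (−α, α) → ℝ (0 < α ≤ ∞) be such that f*[A] is positive semidefinite for every positive semidefinite matrix A with entries in (−α, α) (f applied only off-diagonal). If A and B are positive semidefinite n×n matrices with entries in (−α, α) and A − B is positive semidefinite, then f*[A] − 2f[B] + f*[B] is positive semidefinite. -/

import Mathlib

/-- `f*[A]`: apply `f` to off-diagonal entries, leave diagonal unchanged. -/
def offDiagApply {n : ℕ} (f : ℝ → ℝ) (A : Matrix (Fin n) (Fin n) ℝ) :
    Matrix (Fin n) (Fin n) ℝ :=
  Matrix.of fun i j => if i = j then A i i else f (A i j)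

/-- `f[A]`: apply `f` to every entry. -/
def entrywiseApply {n : ℕ} (f : ℝ → ℝ) (A : Matrix (Fin n) (Fin n) ℝ) :
    Matrix (Fin n) (Fin n) ℝ :=
  Matrix.of fun i j => f (A i j)

open Matrix in
theorem stmt_9 (α : EReal) (hα : 0 < α) (f : ℝ → ℝ)
    (hf : ∀ (m : ℕ) (M : Matrix (Fin m) (Fin m) ℝ), M.PosSemidef →
      (∀ i j, ((|M i j| : ℝ) : EReal) < α) → (offDiagApply f M).PosSemidef)
    (n : ℕ) (A B : Matrix (Fin n) (Fin n) ℝ)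
    (hA : A.PosSemidef) (hB : B.PosSemidef) (hAB : (A - B).PosSemidef)
    (hAα : ∀ i j, ((|A i j| : ℝ) : EReal) < α)
    (hBα : ∀ i j, ((|B i j| : ℝ) : EReal) < α) :
    (offDiagApply f A - (2 : ℝ) • entrywiseApply f B + offDiagApply f B).PosSemidef := by
  classical
  set e : Fin n ⊕ Fin n ≃ Fin (n + n) := finSumFinEquiv with he
  set M₀ : Matrix (Fin n ⊕ Fin n) (Fin n ⊕ Fin n) ℝ := Matrix.fromBlocks A B B B with hM₀
  -- M₀ is PSD
  have hBB : (Matrix.fromBlocks B B B B : Matrix (Fin n ⊕ Fin n) (Fin n ⊕ Fin n) ℝ).PosSemidef := by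
    have h1 : (Matrix.fromBlocks B B B B : Matrix (Fin n ⊕ Fin n) (Fin n ⊕ Fin n) ℝ)
        = (Matrix.fromRows 1 1 : Matrix (Fin n ⊕ Fin n) (Fin n) ℝ) * B
          * (Matrix.fromRows 1 1 : Matrix (Fin n ⊕ Fin n) (Fin n) ℝ)ᴴ := by
      have h2 : (Matrix.fromRows 1 1 : Matrix (Fin n ⊕ Fin n) (Fin n) ℝ)ᴴ
          = (Matrix.fromCols 1 1 : Matrix (Fin n) (Fin n ⊕ Fin n) ℝ) := by
        ext i (j | j) <;> simp [Matrix.conjTranspose_apply, Matrix.fromRows_apply_inl, Matrix.fromRows_apply_inr, Matrix.fromCols_apply_inl, Matrix.fromCols_apply_inr,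
          Matrix.one_apply, eq_comm, Sum.elim_inl, Sum.elim_inr]
      rw [h2, Matrix.fromRows_mul, Matrix.fromRows_mul_fromCols]
      simp
    rw [h1]
    exact hB.mul_mul_conjTranspose_same _
  have hA0 : (Matrix.fromBlocks (A - B) 0 0 0 :
      Matrix (Fin n ⊕ Fin n) (Fin n ⊕ Fin n) ℝ).PosSemidef := by
    have h1 : (Matrix.fromBlocks (A - B) 0 0 0 : Matrix (Fin n ⊕ Fin n) (Fin n ⊕ Fin n) ℝ)
        = (Matrix.fromRows 1 0 : Matrix (Fin n ⊕ Fin n) (Fin n) ℝ) * (A - B)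
          * (Matrix.fromRows 1 0 : Matrix (Fin n ⊕ Fin n) (Fin n) ℝ)ᴴ := by
      have h2 : (Matrix.fromRows 1 0 : Matrix (Fin n ⊕ Fin n) (Fin n) ℝ)ᴴ
          = (Matrix.fromCols 1 0 : Matrix (Fin n) (Fin n ⊕ Fin n) ℝ) := by
        ext i (j | j) <;> simp [Matrix.conjTranspose_apply, Matrix.fromRows_apply_inl, Matrix.fromRows_apply_inr, Matrix.fromCols_apply_inl, Matrix.fromCols_apply_inr,
          Matrix.one_apply, eq_comm, Sum.elim_inl, Sum.elim_inr]
      rw [h2, Matrix.fromRows_mul, Matrix.fromRows_mul_fromCols]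
      simp
    rw [h1]
    exact hAB.mul_mul_conjTranspose_same _
  have hM₀psd : M₀.PosSemidef := by
    have : M₀ = Matrix.fromBlocks B B B B + Matrix.fromBlocks (A - B) 0 0 0 := by
      rw [hM₀]
      ext (i | i) (j | j) <;> simp [Matrix.sub_apply] <;> ring
    rw [this]
    exact hBB.add hA0
  have hM₀α : ∀ k l, ((|M₀ k l| : ℝ) : EReal) < α := by
    rintro (i | i) (j | j) <;>
      simp only [hM₀, Matrix.fromBlocks_apply₁₁, Matrix.fromBlocks_apply₁₂,
        Matrix.fromBlocks_apply₂₁, Matrix.fromBlocks_apply₂₂] <;>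
      first | exact hAα i j | exact hBα i j
  set M : Matrix (Fin (n + n)) (Fin (n + n)) ℝ := M₀.submatrix e.symm e.symm with hM
  have hMpsd : M.PosSemidef := hM₀psd.submatrix e.symm
  have hMα : ∀ i j, ((|M i j| : ℝ) : EReal) < α := fun i j => hM₀α _ _
  have hN : (offDiagApply f M).PosSemidef := hf (n + n) M hMpsd hMα
  set P : Matrix (Fin n ⊕ Fin n) (Fin n ⊕ Fin n) ℝ :=
    Matrix.fromBlocks (offDiagApply f A) (entrywiseApply f B)
      (entrywiseApply f B) (offDiagApply f B) with hP
  have hNP : offDiagApply f M = P.submatrix e.symm e.symm := by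
    ext i j
    obtain ⟨k, rfl⟩ : ∃ k, i = e k := ⟨e.symm i, (e.apply_symm_apply i).symm⟩
    obtain ⟨l, rfl⟩ : ∃ l, j = e l := ⟨e.symm j, (e.apply_symm_apply j).symm⟩
    simp only [offDiagApply, Matrix.of_apply, hM, Matrix.submatrix_apply,
      Equiv.symm_apply_apply, e.injective.eq_iff]
    rcases k with k | k <;> rcases l with l | l <;>
      simp [hP, hM₀, Matrix.fromBlocks, offDiagApply, entrywiseApply]
  have hPpsd : P.PosSemidef := by
    rw [hNP] at hN
    exact (Matrix.posSemidef_submatrix_equiv e.symm).mp hN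
  -- conjugate by J = [I, -I]
  set J : Matrix (Fin n) (Fin n ⊕ Fin n) ℝ :=
    (Matrix.fromCols 1 (-1) : Matrix (Fin n) (Fin n ⊕ Fin n) ℝ) with hJ
  have hJH : Jᴴ = (Matrix.fromRows 1 (-1) : Matrix (Fin n ⊕ Fin n) (Fin n) ℝ) := by
    ext (i | i) j <;> simp [hJ, Matrix.conjTranspose_apply, Matrix.fromRows_apply_inl, Matrix.fromRows_apply_inr, Matrix.fromCols_apply_inl, Matrix.fromCols_apply_inr,
      Matrix.one_apply, eq_comm, Sum.elim_inl, Sum.elim_inr]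
  have key : offDiagApply f A - (2 : ℝ) • entrywiseApply f B + offDiagApply f B
      = J * P * Jᴴ := by
    rw [hJH, hJ, hP, Matrix.fromCols_mul_fromBlocks, Matrix.fromCols_mul_fromRows]
    ext i j
    simp [Matrix.sub_apply, Matrix.add_apply, Matrix.smul_apply]
    ring
  rw [key]
  exact hPpsd.mul_mul_conjTranspose_same _
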